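/- Σ_{n=1}^∞ (-1)^{n-1} / ((2n−1)(2n+1)(2n+3)(2n+5)(2n+7)) = π/96 − 2/63. -/

import Mathlib

open Real Filter Finset Topology

private noncomputable def gL (i : ℕ) : ℝ := (-1 : ℝ) ^ i / (2 * i + 1)

private lemma tendsto_shift (k : ℕ) :
    Tendsto (fun N : ℕ => ∑ n ∈ range N, (-1 : ℝ) ^ n / (2 * (n : ℝ) + (2 * k + 1)))
      atTop (𝓝 ((-1 : ℝ) ^ k * (π / 4 - ∑ i ∈ range k, gL i))) := by
  have key : ∀ N : ℕ, ∑ n ∈ range N, (-1 : ℝ) ^ n / (2 * (n : ℝ) + (2 * k + 1)) =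
      (-1 : ℝ) ^ k * ((∑ i ∈ range (k + N), gL i) - ∑ i ∈ range k, gL i) := by
    intro N
    rw [Finset.sum_range_add, add_sub_cancel_left, Finset.mul_sum]
    refine Finset.sum_congr rfl fun n _ => ?_
    simp only [gL, pow_add, Nat.cast_add]
    rw [mul_div_assoc]
    have hk : ((-1 : ℝ) ^ k) * ((-1:ℝ)^k * ((-1:ℝ)^n / (2 * ((k:ℝ) + n) + 1)))
        = (-1:ℝ)^n / (2 * ((k:ℝ) + n) + 1) := by
      rw [← mul_assoc, ← pow_add, ← two_mul, pow_mul]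
      norm_num
    rw [hk]
    ring_nf
  simp only [key]
  have h1 : Tendsto (fun N : ℕ => ∑ i ∈ range (k + N), gL i) atTop (𝓝 (π / 4)) := by
    have := Real.tendsto_sum_pi_div_four.comp (tendsto_add_atTop_nat k)
    simpa [gL, Function.comp_def, Nat.add_comm] using this
  exact ((h1.sub tendsto_const_nhds).const_mul _)

theorem sum_alt_five_linear_factors :
    ∑' n : ℕ, (-1 : ℝ) ^ n /
        ((2 * (n : ℝ) + 1) * (2 * (n : ℝ) + 3) * (2 * (n : ℝ) + 5) * (2 * (n : ℝ) + 7) *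
          (2 * (n : ℝ) + 9)) =
      π / 96 - 2 / 63 := by
  set f : ℕ → ℝ := fun n => (-1 : ℝ) ^ n /
      ((2 * (n : ℝ) + 1) * (2 * (n : ℝ) + 3) * (2 * (n : ℝ) + 5) * (2 * (n : ℝ) + 7) *
        (2 * (n : ℝ) + 9)) with hf
  have hsumm : Summable f := by
    apply Summable.of_abs
    have hcomp : Summable (fun n : ℕ => 1 / ((n : ℝ) + 1) ^ 2) := by
      have := (summable_nat_add_iff 1).2 (Real.summable_one_div_nat_pow.2 (le_refl 2))
      simpa using this
    refine Summable.of_nonneg_of_le (fun n => abs_nonneg _) (fun n => ?_) hcomp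
    have h1 : (0:ℝ) < 2 * (n : ℝ) + 1 := by positivity
    have h3 : (0:ℝ) < 2 * (n : ℝ) + 3 := by positivity
    have h5 : (0:ℝ) < 2 * (n : ℝ) + 5 := by positivity
    have h7 : (0:ℝ) < 2 * (n : ℝ) + 7 := by positivity
    have h9 : (0:ℝ) < 2 * (n : ℝ) + 9 := by positivity
    have : |f n| = 1 / ((2 * (n : ℝ) + 1) * (2 * (n : ℝ) + 3) * (2 * (n : ℝ) + 5) *
        (2 * (n : ℝ) + 7) * (2 * (n : ℝ) + 9)) := by
      rw [hf, abs_div, abs_pow, abs_neg, abs_one, one_pow, abs_of_pos (by positivity)]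
    rw [this]
    rw [div_le_div_iff₀ (by positivity) (by positivity)]
    nlinarith [sq_nonneg ((n:ℝ)), sq_nonneg ((n:ℝ)+1), h1.le, h3.le, h5.le, h7.le, h9.le,
      mul_pos (mul_pos h1 h3) h5, mul_pos h7 h9]
  have hpf : ∀ n : ℕ, f n =
      (1/384) * ((-1:ℝ)^n / (2*(n:ℝ) + (2*0+1)))
      + (-1/96) * ((-1:ℝ)^n / (2*(n:ℝ) + (2*1+1)))
      + (1/64) * ((-1:ℝ)^n / (2*(n:ℝ) + (2*2+1)))
      + (-1/96) * ((-1:ℝ)^n / (2*(n:ℝ) + (2*3+1)))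
      + (1/384) * ((-1:ℝ)^n / (2*(n:ℝ) + (2*4+1))) := by
    intro n
    have h1 : (2 * (n:ℝ) + 1) ≠ 0 := by positivity
    have h3 : (2 * (n:ℝ) + 3) ≠ 0 := by positivity
    have h5 : (2 * (n:ℝ) + 5) ≠ 0 := by positivity
    have h7 : (2 * (n:ℝ) + 7) ≠ 0 := by positivity
    have h9 : (2 * (n:ℝ) + 9) ≠ 0 := by positivity
    rw [hf]
    field_simp
    ring
  have hlim : Tendsto (fun N : ℕ => ∑ n ∈ range N, f n) atTop (𝓝 (π / 96 - 2 / 63)) := by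
    have hsum_eq : ∀ N : ℕ, ∑ n ∈ range N, f n =
        (1/384) * (∑ n ∈ range N, (-1:ℝ)^n / (2*(n:ℝ) + (2*(0:ℕ)+1)))
        + (-1/96) * (∑ n ∈ range N, (-1:ℝ)^n / (2*(n:ℝ) + (2*(1:ℕ)+1)))
        + (1/64) * (∑ n ∈ range N, (-1:ℝ)^n / (2*(n:ℝ) + (2*(2:ℕ)+1)))
        + (-1/96) * (∑ n ∈ range N, (-1:ℝ)^n / (2*(n:ℝ) + (2*(3:ℕ)+1)))
        + (1/384) * (∑ n ∈ range N, (-1:ℝ)^n / (2*(n:ℝ) + (2*(4:ℕ)+1))) := by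
      intro N
      simp only [Finset.mul_sum, ← Finset.sum_add_distrib]
      refine Finset.sum_congr rfl fun n _ => ?_
      have := hpf n
      push_cast at this ⊢
      linarith [this]
    simp only [hsum_eq]
    have T0 := tendsto_shift 0
    have T1 := tendsto_shift 1
    have T2 := tendsto_shift 2
    have T3 := tendsto_shift 3
    have T4 := tendsto_shift 4
    push_cast at T0 T1 T2 T3 T4
    have := ((((T0.const_mul (1/384 : ℝ)).add (T1.const_mul (-1/96 : ℝ))).add
        (T2.const_mul (1/64 : ℝ))).add (T3.const_mul (-1/96 : ℝ))).add
        (T4.const_mul (1/384 : ℝ))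
    convert this using 2
    case e'_3 => push_cast; ring
    have e1 : ∑ i ∈ range 1, gL i = 1 := by norm_num [gL, Finset.sum_range_succ]
    have e2 : ∑ i ∈ range 2, gL i = 2/3 := by norm_num [gL, Finset.sum_range_succ]
    have e3 : ∑ i ∈ range 3, gL i = 13/15 := by norm_num [gL, Finset.sum_range_succ]
    have e4 : ∑ i ∈ range 4, gL i = 76/105 := by norm_num [gL, Finset.sum_range_succ]
    rw [e1, e2, e3, e4]
    norm_num
    ring
  exact tendsto_nhds_unique hsumm.hasSum.tendsto_sum_nat hlim
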